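/- Let (X_i) be i.i.d. nonnegative integer-valued random variables and set p_n = P(X_1 + ... + X_n ≤ n). If p_{n} ~ P(X_1 + ... + X_n ≤ n − k) for every fixed k ≥ 0, then p_{n+1} ~ p_n as n → ∞, i.e. P(X_1 + ... + X_{n+1} ≤ n+1) / P(X_1 + ... + X_n ≤ n) → 1. -/

import Mathlib

open MeasureTheory ProbabilityTheory Filter
open scoped ENNReal

lemma decomp_aux {Ω : Type*} [MeasurableSpace Ω] (P : Measure Ω) [IsProbabilityMeasure P]
    (X : ℕ → Ω → ℕ) (hmeas : ∀ i, Measurable (X i))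
    (hindep : iIndepFun X P)
    (n K : ℕ) (m : ℤ) :
    ∑ k ∈ Finset.range K,
        P (X n ⁻¹' {k}) * P {ω | ((∑ i ∈ Finset.range n, X i ω : ℕ) : ℤ) ≤ m - k}
      ≤ P {ω | ((∑ i ∈ Finset.range (n+1), X i ω : ℕ) : ℤ) ≤ m} := by
  classical
  have hSmeas : Measurable (fun ω => ∑ i ∈ Finset.range n, X i ω) :=
    Finset.measurable_sum _ fun i _ => hmeas i
  have hind : IndepFun (∑ i ∈ Finset.range n, X i) (X n) P :=
    hindep.indepFun_finsetSum_of_notMem hmeas (Finset.notMem_range_self)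
  set A : ℕ → Set Ω := fun k =>
    {ω | ((∑ i ∈ Finset.range n, X i ω : ℕ) : ℤ) ≤ m - k} ∩ X n ⁻¹' {k} with hA
  have hAmeas : ∀ k, MeasurableSet (A k) := fun k =>
    (hSmeas (show MeasurableSet {x : ℕ | (x : ℤ) ≤ m - k} from trivial)).inter
      ((hmeas n) trivial)
  have hAP : ∀ k, P (A k) = P (X n ⁻¹' {k}) *
      P {ω | ((∑ i ∈ Finset.range n, X i ω : ℕ) : ℤ) ≤ m - k} := by
    intro k
    have := hind.measure_inter_preimage_eq_mul
      {x : ℕ | (x : ℤ) ≤ m - k} {k} trivial trivial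
    have hpre : (∑ i ∈ Finset.range n, X i) ⁻¹' {x : ℕ | (x : ℤ) ≤ m - k} =
        {ω | ((∑ i ∈ Finset.range n, X i ω : ℕ) : ℤ) ≤ m - k} := by
      ext ω; simp [Finset.sum_apply]
    rw [hpre] at this
    rw [this, mul_comm]
  have hdisj : (Finset.range K : Set ℕ).PairwiseDisjoint A := by
    intro j _ k _ hjk
    refine Set.disjoint_left.2 ?_
    rintro ω ⟨-, hj⟩ ⟨-, hk⟩
    exact hjk (hj.symm.trans hk)
  have hsub : (⋃ k ∈ Finset.range K, A k) ⊆
      {ω | ((∑ i ∈ Finset.range (n+1), X i ω : ℕ) : ℤ) ≤ m} := by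
    rintro ω hω
    simp only [Set.mem_iUnion] at hω
    obtain ⟨k, -, ⟨h1, h2⟩⟩ := hω
    simp only [Set.mem_preimage, Set.mem_singleton_iff] at h2
    simp only [Set.mem_setOf_eq] at h1 ⊢
    rw [Finset.sum_range_succ]
    push_cast [h2] at h1 ⊢
    omega
  calc ∑ k ∈ Finset.range K,
        P (X n ⁻¹' {k}) * P {ω | ((∑ i ∈ Finset.range n, X i ω : ℕ) : ℤ) ≤ m - k}
      = ∑ k ∈ Finset.range K, P (A k) := by
        refine Finset.sum_congr rfl fun k _ => (hAP k).symm
    _ = P (⋃ k ∈ Finset.range K, A k) :=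
        (measure_biUnion_finset hdisj fun k _ => hAmeas k).symm
    _ ≤ _ := measure_mono hsub

theorem succ_cumulative_equiv
    {Ω : Type*} [MeasurableSpace Ω] (P : Measure Ω) [IsProbabilityMeasure P]
    (μ : Measure ℕ) [IsProbabilityMeasure μ]
    (X : ℕ → Ω → ℕ) (hmeas : ∀ i, Measurable (X i))
    (hindep : iIndepFun X P)
    (hlaw : ∀ i, P.map (X i) = μ)
    (hequiv : ∀ k : ℕ, Tendsto (fun n : ℕ =>
        (P {ω | ((∑ i ∈ Finset.range n, X i ω : ℕ) : ℤ) ≤ (n : ℤ) - (k : ℤ)}).toReal /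
        (P {ω | ((∑ i ∈ Finset.range n, X i ω : ℕ) : ℤ) ≤ (n : ℤ)}).toReal)
      atTop (nhds 1)) :
    Tendsto (fun n : ℕ =>
        (P {ω | (∑ i ∈ Finset.range (n + 1), X i ω : ℕ) ≤ n + 1}).toReal /
        (P {ω | (∑ i ∈ Finset.range n, X i ω : ℕ) ≤ n}).toReal)
      atTop (nhds 1) := by
  classical
  -- real-valued cumulative probabilities
  set p : ℕ → ℤ → ℝ :=
    fun n m => (P {ω | ((∑ i ∈ Finset.range n, X i ω : ℕ) : ℤ) ≤ m}).toReal with hp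
  have hpnonneg : ∀ n m, 0 ≤ p n m := fun n m => ENNReal.toReal_nonneg
  have hpmono : ∀ n : ℕ, ∀ m m' : ℤ, m ≤ m' → p n m ≤ p n m' := by
    intro n m m' h
    exact ENNReal.toReal_mono (measure_ne_top P _)
      (measure_mono fun ω hω => le_trans hω h)
  -- the goal in terms of `p`
  have hgoal : (fun n : ℕ =>
        (P {ω | (∑ i ∈ Finset.range (n + 1), X i ω : ℕ) ≤ n + 1}).toReal /
        (P {ω | (∑ i ∈ Finset.range n, X i ω : ℕ) ≤ n}).toReal)
      = fun n : ℕ => p (n+1) ((n : ℤ) + 1) / p n (n : ℤ) := by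
    funext n
    have h1 : {ω | (∑ i ∈ Finset.range (n + 1), X i ω : ℕ) ≤ n + 1}
        = {ω | ((∑ i ∈ Finset.range (n+1), X i ω : ℕ) : ℤ) ≤ (n : ℤ) + 1} := by
      ext ω; simp only [Set.mem_setOf_eq]; exact_mod_cast Iff.rfl
    have h2 : {ω | (∑ i ∈ Finset.range n, X i ω : ℕ) ≤ n}
        = {ω | ((∑ i ∈ Finset.range n, X i ω : ℕ) : ℤ) ≤ (n : ℤ)} := by
      ext ω; simp only [Set.mem_setOf_eq]; exact_mod_cast Iff.rfl
    rw [h1, h2]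
  rw [hgoal]
  set a : ℕ → ℝ := fun n => p (n+1) ((n : ℤ) + 1) / p n (n : ℤ) with ha
  -- hequiv in terms of p
  have hequiv' : ∀ k : ℕ, Tendsto (fun n : ℕ => p n ((n : ℤ) - k) / p n (n : ℤ))
      atTop (nhds 1) := fun k => hequiv k
  -- eventually `p n n` is positive
  have hpos_of_ratio : ∀ {x y : ℝ}, 0 < x / y → 0 ≤ y → 0 < y := by
    intro x y h hy
    rcases hy.lt_or_eq with h' | h'
    · exact h'
    · rw [← h', div_zero] at h; exact absurd h (lt_irrefl 0)
  have hpos : ∀ᶠ n in atTop, 0 < p n (n : ℤ) := by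
    have h := (hequiv' 0).eventually (eventually_gt_nhds (show (0:ℝ) < 1 by norm_num))
    filter_upwards [h] with n hn
    exact hpos_of_ratio hn (hpnonneg n _)
  -- the shifted equivalence : p (n+1) n / p (n+1) (n+1) → 1
  have hshift : Tendsto (fun n : ℕ => p (n+1) (n : ℤ) / p (n+1) ((n : ℤ) + 1))
      atTop (nhds 1) := by
    have h := (hequiv' 1).comp (tendsto_add_atTop_nat 1)
    simp only [Nat.cast_one] at h
    have heq : ((fun n : ℕ => p n ((n : ℤ) - 1) / p n (n : ℤ)) ∘ (fun n => n + 1))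
        = fun n : ℕ => p (n+1) (n : ℤ) / p (n+1) ((n : ℤ) + 1) := by
      funext n
      simp only [Function.comp_apply]
      have e1 : ((n + 1 : ℕ) : ℤ) - 1 = (n : ℤ) := by push_cast; ring
      have e2 : ((n + 1 : ℕ) : ℤ) = (n : ℤ) + 1 := by push_cast; ring
      rw [e1, e2]
    rwa [heq] at h
  have hshiftpos : ∀ᶠ n in atTop, 0 < p (n+1) (n : ℤ) := by
    have h := hshift.eventually (eventually_gt_nhds (show (0:ℝ) < 1 by norm_num))
    filter_upwards [h] with n hn
    rcases (hpnonneg (n+1) (n : ℤ)).lt_or_eq with h' | h'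
    · exact h'
    · rw [← h', zero_div] at hn; exact absurd hn (lt_irrefl 0)
  -- the upper comparison sequence
  set b : ℕ → ℝ := fun n => p (n+1) ((n : ℤ) + 1) / p (n+1) (n : ℤ) with hbdef
  have hb : Tendsto b atTop (nhds 1) := by
    have h := hshift.inv₀ one_ne_zero
    have heq : (fun n : ℕ => (p (n+1) (n : ℤ) / p (n+1) ((n : ℤ) + 1))⁻¹) = b := by
      funext n; rw [inv_div]
    rw [heq] at h
    simpa using h
  have hd : ∀ n : ℕ, p (n+1) (n : ℤ) ≤ p n (n : ℤ) := by
    intro n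
    refine ENNReal.toReal_mono (measure_ne_top P _) (measure_mono ?_)
    intro ω hω
    simp only [Set.mem_setOf_eq] at hω ⊢
    refine le_trans ?_ hω
    have : (∑ i ∈ Finset.range n, X i ω) ≤ ∑ i ∈ Finset.range (n+1), X i ω := by
      rw [Finset.sum_range_succ]; exact Nat.le_add_right _ _
    exact_mod_cast this
  have hab : ∀ᶠ n in atTop, a n ≤ b n := by
    filter_upwards [hshiftpos] with n hn
    exact div_le_div_of_nonneg_left (hpnonneg _ _) hn (hd n)
  have ha_nonneg : ∀ n, 0 ≤ a n := fun n => div_nonneg (hpnonneg _ _) (hpnonneg _ _)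
  have hbdd_below : atTop.IsBoundedUnder (· ≥ ·) a :=
    isBoundedUnder_of ⟨0, fun n => ha_nonneg n⟩
  have hbdd_above : atTop.IsBoundedUnder (· ≤ ·) a :=
    (hb.isBoundedUnder_le).mono_le hab
  -- limsup ≤ 1
  have hlimsup : limsup a atTop ≤ 1 := by
    have h1 : limsup a atTop ≤ limsup b atTop :=
      limsup_le_limsup hab (hbdd_below.isCoboundedUnder_le) hb.isBoundedUnder_le
    rwa [hb.limsup_eq] at h1
  -- the law identity
  have hlaw' : ∀ n k : ℕ, P (X n ⁻¹' {k}) = μ {k} := by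
    intro n k
    rw [← hlaw n, Measure.map_apply (hmeas n) trivial]
  -- lower comparison sequences
  have hkey : ∀ K n : ℕ, 0 < p n (n : ℤ) →
      (μ {0}).toReal + ∑ k ∈ Finset.range K,
        (μ {k+1}).toReal * (p n ((n : ℤ) - k) / p n (n : ℤ)) ≤ a n := by
    intro K n hn
    have hENN := decomp_aux P X hmeas hindep n (K+1) ((n : ℤ) + 1)
    -- rewrite laws
    have hENN' : ∑ k ∈ Finset.range (K+1),
        μ {k} * P {ω | ((∑ i ∈ Finset.range n, X i ω : ℕ) : ℤ) ≤ (n : ℤ) + 1 - k}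
        ≤ P {ω | ((∑ i ∈ Finset.range (n+1), X i ω : ℕ) : ℤ) ≤ (n : ℤ) + 1} := by
      refine le_trans (le_of_eq ?_) hENN
      exact Finset.sum_congr rfl fun k _ => by rw [hlaw' n k]
    -- pass to reals
    have hreal : ∑ k ∈ Finset.range (K+1), (μ {k}).toReal * p n ((n : ℤ) + 1 - k)
        ≤ p (n+1) ((n : ℤ) + 1) := by
      have := ENNReal.toReal_mono (measure_ne_top P _) hENN'
      rw [ENNReal.toReal_sum (fun k _ => ENNReal.mul_ne_top (measure_ne_top μ _)
        (measure_ne_top P _))] at this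
      refine le_trans (le_of_eq ?_) this
      exact Finset.sum_congr rfl fun k _ => by rw [ENNReal.toReal_mul]
    -- split off the k = 0 term
    rw [Finset.sum_range_succ'] at hreal
    have hzero : (μ {0}).toReal * p n (n : ℤ)
        ≤ (μ {0}).toReal * p n ((n : ℤ) + 1 - (0:ℕ)) :=
      mul_le_mul_of_nonneg_left (hpmono n _ _ (by push_cast; omega)) ENNReal.toReal_nonneg
    have hterm : ∀ k : ℕ, (μ {k+1}).toReal * p n ((n : ℤ) + 1 - (k+1 : ℕ))
        = (μ {k+1}).toReal * p n ((n : ℤ) - k) := by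
      intro k
      congr 1
      congr 1
      push_cast
      ring
    have hnum : (μ {0}).toReal * p n (n : ℤ) + ∑ k ∈ Finset.range K,
        (μ {k+1}).toReal * p n ((n : ℤ) - k) ≤ p (n+1) ((n : ℤ) + 1) := by
      calc (μ {0}).toReal * p n (n : ℤ) + ∑ k ∈ Finset.range K,
            (μ {k+1}).toReal * p n ((n : ℤ) - k)
          ≤ (μ {0}).toReal * p n ((n : ℤ) + 1 - (0:ℕ)) + ∑ k ∈ Finset.range K,
            (μ {k+1}).toReal * p n ((n : ℤ) + 1 - (k+1 : ℕ)) := by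
            refine add_le_add hzero (le_of_eq ?_)
            exact (Finset.sum_congr rfl fun k _ => hterm k).symm
        _ = ∑ k ∈ Finset.range K, (μ {k+1}).toReal * p n ((n : ℤ) + 1 - (k+1 : ℕ))
            + (μ {0}).toReal * p n ((n : ℤ) + 1 - (0:ℕ)) := by ring
        _ ≤ p (n+1) ((n : ℤ) + 1) := hreal
    -- divide by p n n
    have hc : (μ {0}).toReal + ∑ k ∈ Finset.range K,
        (μ {k+1}).toReal * (p n ((n : ℤ) - k) / p n (n : ℤ))
        = ((μ {0}).toReal * p n (n : ℤ) + ∑ k ∈ Finset.range K,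
          (μ {k+1}).toReal * p n ((n : ℤ) - k)) / p n (n : ℤ) := by
      rw [add_div, mul_div_assoc, div_self hn.ne', mul_one, Finset.sum_div]
      congr 1
      exact Finset.sum_congr rfl fun k _ => (mul_div_assoc _ _ _).symm
    rw [hc]
    exact div_le_div_of_nonneg_right hnum hn.le
  -- partial sums of μ tend to 1
  have htsum : Tendsto (fun K : ℕ => ∑ k ∈ Finset.range (K+1), (μ {k}).toReal)
      atTop (nhds 1) := by
    have huniv : (Set.univ : Set ℕ) = ⋃ k : ℕ, {k} := by ext x; simp
    have h1 : (∑' k : ℕ, μ {k}) = 1 := by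
      rw [← measure_univ (μ := μ), huniv,
        measure_iUnion (fun i j hij => by simpa using hij) (fun i => measurableSet_singleton i)]
    have hsummable : Summable (fun k : ℕ => (μ {k}).toReal) :=
      ENNReal.summable_toReal (by rw [h1]; exact ENNReal.one_ne_top)
    have htsum_eq : (∑' k : ℕ, (μ {k}).toReal) = 1 := by
      rw [← ENNReal.tsum_toReal_eq (fun k => measure_ne_top μ _), h1, ENNReal.toReal_one]
    have hhs : HasSum (fun k : ℕ => (μ {k}).toReal) 1 := htsum_eq ▸ hsummable.hasSum
    exact hhs.tendsto_sum_nat.comp (tendsto_add_atTop_nat 1)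
  -- each partial sum is ≤ liminf a
  have hliminf_K : ∀ K : ℕ, (∑ k ∈ Finset.range (K+1), (μ {k}).toReal)
      ≤ liminf a atTop := by
    intro K
    set c : ℕ → ℝ := fun n => (μ {0}).toReal + ∑ k ∈ Finset.range K,
      (μ {k+1}).toReal * (p n ((n : ℤ) - k) / p n (n : ℤ)) with hcdef
    have hc_tendsto : Tendsto c atTop
        (nhds ((μ {0}).toReal + ∑ k ∈ Finset.range K, (μ {k+1}).toReal * 1)) := by
      exact tendsto_const_nhds.add
        (tendsto_finset_sum _ fun k _ => tendsto_const_nhds.mul (hequiv' k))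
    have hval : (μ {0}).toReal + ∑ k ∈ Finset.range K, (μ {k+1}).toReal * 1
        = ∑ k ∈ Finset.range (K+1), (μ {k}).toReal := by
      rw [Finset.sum_range_succ']
      simp [add_comm]
    rw [hval] at hc_tendsto
    have hca : ∀ᶠ n in atTop, c n ≤ a n := by
      filter_upwards [hpos] with n hn
      exact hkey K n hn
    have h1 : liminf c atTop ≤ liminf a atTop :=
      liminf_le_liminf hca (hc_tendsto.isBoundedUnder_ge) (hbdd_above.isCoboundedUnder_ge)
    rwa [hc_tendsto.liminf_eq] at h1
  have hliminf : 1 ≤ liminf a atTop :=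
    le_of_tendsto htsum (Eventually.of_forall hliminf_K)
  exact tendsto_of_le_liminf_of_limsup_le hliminf hlimsup hbdd_above hbdd_below
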